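/- Let {r_k}_{k≥0} ⊆ (0,1) be a non-decreasing sequence of reals with r̄ := sup_k r_k < 1, let n₀ ∈ ℕ₀, ν₀ ∈ (0,1], and μ₀ > 0. For each k ∈ ℕ₀, write k = k₂(n₀+1) + k₁ with k₁, k₂ ∈ ℕ₀ and k₁ ≤ n₀, and define μ_k := μ₀·(k₂(n₀+1) + ν₀·k₁ + 1)^{−r_k}. Then: (a) the sequence {μ_k} is strictly decreasing and positive; (b) μ_k → 0 as k → ∞; and (c) for every K ∈ ℕ₀, the partial sum satisfies ∑_{k=⌈K/2⌉}^{K} μ_k ≥ (μ₀ / 2^{2r̄+1})·K^{1−r̄} (in particular, this sum tends to infinity as K → ∞). -/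

import Mathlib

open scoped BigOperators

/-- The explicit smoothing parameter sequence
`μ_k = μ₀ (k₂(n₀+1) + ν₀ k₁ + 1)^{-r_k}` (with `k = k₂(n₀+1) + k₁`, `k₁ ≤ n₀`)
is positive and strictly decreasing, tends to `0`, and its partial sums satisfy
`∑_{k=⌈K/2⌉}^{K} μ_k ≥ (μ₀ / 2^{2r̄+1}) K^{1-r̄}`. -/
theorem smoothing_sequence_properties
    (r : ℕ → ℝ) (hr : ∀ k, 0 < r k ∧ r k < 1) (hrmono : Monotone r)
    (rbar : ℝ) (hrbar : IsLUB (Set.range r) rbar) (hrbar1 : rbar < 1)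
    (n₀ : ℕ) (ν₀ : ℝ) (hν₀ : 0 < ν₀ ∧ ν₀ ≤ 1) (μ₀ : ℝ) (hμ₀ : 0 < μ₀)
    (μ : ℕ → ℝ)
    (hμ : ∀ k : ℕ, μ k =
      μ₀ * ((((k / (n₀ + 1)) * (n₀ + 1) : ℕ) : ℝ) + ν₀ * ((k % (n₀ + 1) : ℕ) : ℝ) + 1)
        ^ (-(r k))) :
    StrictAnti μ ∧ (∀ k, 0 < μ k) ∧
    Filter.Tendsto μ Filter.atTop (nhds 0) ∧
    ∀ K : ℕ, μ₀ / 2 ^ (2 * rbar + 1) * (K : ℝ) ^ (1 - rbar) ≤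
      ∑ k ∈ Finset.Icc ((K + 1) / 2) K, μ k := by
  set B : ℕ → ℝ := fun k =>
    (((k / (n₀ + 1)) * (n₀ + 1) : ℕ) : ℝ) + ν₀ * ((k % (n₀ + 1) : ℕ) : ℝ) + 1 with hB
  have hμB : ∀ k, μ k = μ₀ * (B k) ^ (-(r k)) := hμ
  have hdm : ∀ k, (k / (n₀ + 1)) * (n₀ + 1) + k % (n₀ + 1) = k := by
    intro k; rw [mul_comm]; exact Nat.div_add_mod k (n₀ + 1)
  have hmle : ∀ k, k % (n₀ + 1) ≤ n₀ := by
    intro k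
    have := Nat.mod_lt k (show 0 < n₀ + 1 by omega)
    omega
  -- basic facts about r and rbar
  have hrk : ∀ k, r k ≤ rbar := fun k => hrbar.1 ⟨k, rfl⟩
  have hrbar0 : 0 < rbar := lt_of_lt_of_le (hr 0).1 (hrk 0)
  -- B k ≥ 1
  have hB1 : ∀ k, (1 : ℝ) ≤ B k := by
    intro k
    have h1 : (0:ℝ) ≤ (((k / (n₀ + 1)) * (n₀ + 1) : ℕ) : ℝ) := Nat.cast_nonneg _
    have h2 : (0:ℝ) ≤ ν₀ * ((k % (n₀ + 1) : ℕ) : ℝ) :=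
      mul_nonneg hν₀.1.le (Nat.cast_nonneg _)
    simp only [hB]; linarith
  have hB0 : ∀ k, (0 : ℝ) < B k := fun k => lt_of_lt_of_le one_pos (hB1 k)
  -- B k ≤ k + 1
  have hBub : ∀ k, B k ≤ (k : ℝ) + 1 := by
    intro k
    have hd' : (((k / (n₀ + 1)) * (n₀ + 1) : ℕ) : ℝ) + ((k % (n₀ + 1) : ℕ) : ℝ) = k := by
      exact_mod_cast congrArg (Nat.cast : ℕ → ℝ) (hdm k)
    have h2 : ν₀ * ((k % (n₀ + 1) : ℕ) : ℝ) ≤ ((k % (n₀ + 1) : ℕ) : ℝ) := by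
      nlinarith [Nat.cast_nonneg (α := ℝ) (k % (n₀ + 1)), hν₀.2]
    simp only [hB]; linarith
  -- B k ≥ k - n₀ + 1
  have hBlb : ∀ k : ℕ, (k : ℝ) - n₀ + 1 ≤ B k := by
    intro k
    have hd' : (((k / (n₀ + 1)) * (n₀ + 1) : ℕ) : ℝ) + ((k % (n₀ + 1) : ℕ) : ℝ) = k := by
      exact_mod_cast congrArg (Nat.cast : ℕ → ℝ) (hdm k)
    have hm' : ((k % (n₀ + 1) : ℕ) : ℝ) ≤ n₀ := by exact_mod_cast hmle k
    have h2 : (0:ℝ) ≤ ν₀ * ((k % (n₀ + 1) : ℕ) : ℝ) :=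
      mul_nonneg hν₀.1.le (Nat.cast_nonneg _)
    simp only [hB]; linarith
  -- B is strictly increasing step by step
  have hBstep : ∀ k, B k < B (k + 1) := by
    intro k
    by_cases hdvd : (n₀ + 1) ∣ (k + 1)
    · have hq : (k + 1) / (n₀ + 1) = k / (n₀ + 1) + 1 := by
        rw [Nat.succ_div, if_pos hdvd]
      have hr0 : (k + 1) % (n₀ + 1) = 0 := Nat.mod_eq_zero_of_dvd hdvd
      have hrn : k % (n₀ + 1) = n₀ := by
        have h1 := hdm k; have h2 := hdm (k + 1)
        rw [hq, add_mul, one_mul, hr0] at h2; omega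
      simp only [hB, hq, hr0, hrn]
      push_cast
      nlinarith [hν₀.1, hν₀.2, Nat.cast_nonneg (α := ℝ) n₀]
    · have hq : (k + 1) / (n₀ + 1) = k / (n₀ + 1) := by
        rw [Nat.succ_div, if_neg hdvd]; omega
      have hr1 : (k + 1) % (n₀ + 1) = k % (n₀ + 1) + 1 := by
        have h1 := hdm k; have h2 := hdm (k+1); rw [hq] at h2; omega
      simp only [hB, hq, hr1]
      push_cast
      nlinarith [hν₀.1]
  have hμpos : ∀ k, 0 < μ k := by
    intro k; rw [hμB k]
    exact mul_pos hμ₀ (Real.rpow_pos_of_pos (hB0 k) _)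
  have hanti : StrictAnti μ := by
    apply strictAnti_nat_of_succ_lt
    intro k
    rw [hμB k, hμB (k + 1)]
    have h1 : B (k + 1) ^ (-(r (k + 1))) ≤ B (k + 1) ^ (-(r k)) :=
      Real.rpow_le_rpow_of_exponent_le (hB1 _) (neg_le_neg (hrmono (Nat.le_succ k)))
    have h2 : B (k + 1) ^ (-(r k)) < B k ^ (-(r k)) := by
      rw [Real.rpow_neg (hB0 _).le, Real.rpow_neg (hB0 _).le]
      apply inv_strictAnti₀ (Real.rpow_pos_of_pos (hB0 k) _)
      exact Real.rpow_lt_rpow (hB0 k).le (hBstep k) (hr k).1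
    exact mul_lt_mul_of_pos_left (lt_of_le_of_lt h1 h2) hμ₀
  have htend : Filter.Tendsto μ Filter.atTop (nhds 0) := by
    have hBtend : Filter.Tendsto B Filter.atTop Filter.atTop := by
      apply Filter.tendsto_atTop_mono hBlb
      simp only [sub_eq_add_neg]
      exact Filter.tendsto_atTop_add_const_right _ _
        (Filter.tendsto_atTop_add_const_right _ _ tendsto_natCast_atTop_atTop)
    have htg : Filter.Tendsto (fun k => μ₀ * B k ^ (-(r 0))) Filter.atTop (nhds 0) := by
      have := ((tendsto_rpow_neg_atTop (hr 0).1).comp hBtend).const_mul μ₀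
      simpa using this
    apply squeeze_zero (fun k => (hμpos k).le) _ htg
    intro k
    rw [hμB k]
    exact mul_le_mul_of_nonneg_left
      (Real.rpow_le_rpow_of_exponent_le (hB1 k) (neg_le_neg (hrmono (Nat.zero_le k)))) hμ₀.le
  refine ⟨hanti, hμpos, htend, ?_⟩
  intro K
  rcases Nat.eq_zero_or_pos K with hK | hK
  · subst hK
    norm_num
    rw [Real.zero_rpow (by linarith : (1:ℝ) - rbar ≠ 0), mul_zero]
    exact (hμpos 0).le
  · have hK0 : (0:ℝ) < K := by exact_mod_cast hK
    have hK1 : (1:ℝ) ≤ K := by exact_mod_cast hK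
    have h2K : (0:ℝ) < 2 * K := by linarith
    have hterm : ∀ k ∈ Finset.Icc ((K + 1) / 2) K, μ₀ * (2 * (K:ℝ)) ^ (-rbar) ≤ μ k := by
      intro k hk
      simp only [Finset.mem_Icc] at hk
      rw [hμB k]
      apply mul_le_mul_of_nonneg_left _ hμ₀.le
      have h1 : B k ^ (-rbar) ≤ B k ^ (-(r k)) :=
        Real.rpow_le_rpow_of_exponent_le (hB1 k) (neg_le_neg (hrk k))
      refine le_trans ?_ h1
      rw [Real.rpow_neg h2K.le, Real.rpow_neg (hB0 k).le]
      apply inv_anti₀ (Real.rpow_pos_of_pos (hB0 k) _)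
      apply Real.rpow_le_rpow (hB0 k).le _ hrbar0.le
      have hbu := hBub k
      have hk2 : (k:ℝ) ≤ K := Nat.cast_le.mpr hk.2
      linarith
    have hcard : (K:ℝ) / 2 ≤ ((Finset.Icc ((K + 1) / 2) K).card : ℝ) := by
      rw [Nat.card_Icc]
      have h : K ≤ 2 * (K + 1 - (K + 1) / 2) := by omega
      have h' : (K:ℝ) ≤ 2 * ((K + 1 - (K + 1) / 2 : ℕ) : ℝ) := by exact_mod_cast h
      linarith
    have hsum : ((Finset.Icc ((K + 1) / 2) K).card : ℝ) * (μ₀ * (2 * (K:ℝ)) ^ (-rbar)) ≤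
        ∑ k ∈ Finset.Icc ((K + 1) / 2) K, μ k := by
      have := Finset.card_nsmul_le_sum _ _ _ hterm
      simpa [nsmul_eq_mul] using this
    have hpos' : (0:ℝ) ≤ μ₀ * (2 * (K:ℝ)) ^ (-rbar) := by positivity
    have hKpow : (K:ℝ) ^ (-rbar) * (K:ℝ) = (K:ℝ) ^ (1 - rbar) := by
      nth_rewrite 2 [← Real.rpow_one (K:ℝ)]
      rw [← Real.rpow_add hK0]
      ring_nf
    have hmulpow : (2 * (K:ℝ)) ^ (-rbar) = (2:ℝ) ^ (-rbar) * (K:ℝ) ^ (-rbar) :=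
      Real.mul_rpow (by norm_num) hK0.le
    have hc : μ₀ / 2 ^ (2 * rbar + 1) ≤ μ₀ * 2 ^ (-rbar) / 2 := by
      have h2e : (2:ℝ) ^ (rbar + 1) = 2 ^ rbar * 2 := by
        rw [Real.rpow_add (by norm_num), Real.rpow_one]
      have hle : (2:ℝ) ^ (rbar + 1) ≤ 2 ^ (2 * rbar + 1) :=
        Real.rpow_le_rpow_of_exponent_le one_le_two (by linarith)
      have hp1 : (0:ℝ) < 2 ^ (rbar + 1) := Real.rpow_pos_of_pos (by norm_num) _
      have step1 : μ₀ / 2 ^ (2 * rbar + 1) ≤ μ₀ / 2 ^ (rbar + 1) :=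
        div_le_div_of_nonneg_left hμ₀.le hp1 hle
      have step2 : μ₀ / 2 ^ (rbar + 1) = μ₀ * 2 ^ (-rbar) / 2 := by
        rw [h2e, Real.rpow_neg (by norm_num : (0:ℝ) ≤ 2)]
        field_simp
      linarith [step1, step2.le, step2.ge]
    calc μ₀ / 2 ^ (2 * rbar + 1) * (K:ℝ) ^ (1 - rbar)
        ≤ μ₀ * 2 ^ (-rbar) / 2 * (K:ℝ) ^ (1 - rbar) :=
          mul_le_mul_of_nonneg_right hc (Real.rpow_nonneg hK0.le _)
      _ = (K:ℝ) / 2 * (μ₀ * (2 * (K:ℝ)) ^ (-rbar)) := by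
          rw [hmulpow, ← hKpow]; ring
      _ ≤ ((Finset.Icc ((K + 1) / 2) K).card : ℝ) * (μ₀ * (2 * (K:ℝ)) ^ (-rbar)) :=
          mul_le_mul_of_nonneg_right hcard hpos'
      _ ≤ ∑ k ∈ Finset.Icc ((K + 1) / 2) K, μ k := hsum
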